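/- There exists an integer n₀ such that for all n ≥ n₀ the following holds with R = n^{4/7}: let e_1 ≤ e_2 ≤ … ≤ e_K be the pairwise distances of P₃ that lie in the interval [2R − 3, 2R], listed in nondecreasing order. Then ∑_{i=1}^{K−1} (e_{i+1} − e_i)² ≤ 45·n^{−6/7}. -/

import Mathlib

open scoped Real

/-- The radius `R = n^{4/7}` (a real power of the positive integer `n`). -/
noncomputable def Rpow (n : ℕ) : ℝ := (n : ℝ) ^ ((4 : ℝ) / 7)

/-- The set `P₃` of points on the circle of radius `R = n^{4/7}` centered at the origin,
given in polar coordinates by `p_s = (R, 2s·R⁻¹)` for integers `0 ≤ s ≤ R/2` together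
with `q_t = (R, π + 2t·(R⁻¹ + 4·R⁻²))` for integers `0 ≤ t ≤ R/2`; the plane is modeled
by `ℂ`, a polar point `(R, θ)` being `R·exp(θ·I)`. -/
noncomputable def P3 (n : ℕ) : Finset ℂ :=
  letI := Classical.decEq ℂ
  ((Finset.range (⌊Rpow n / 2⌋₊ + 1)).image fun s : ℕ =>
      (Rpow n : ℂ) * Complex.exp ((2 * (s : ℝ) * (Rpow n)⁻¹ : ℝ) * Complex.I)) ∪
  ((Finset.range (⌊Rpow n / 2⌋₊ + 1)).image fun t : ℕ =>
      (Rpow n : ℂ) *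
        Complex.exp
          ((π + 2 * (t : ℝ) * ((Rpow n)⁻¹ + 4 * ((Rpow n ^ 2)⁻¹)) : ℝ) * Complex.I))

/-- The multiset of pairwise distances of `P₃` that lie in `[2R - 3, 2R]`, with
`R = n^{4/7}`. -/
noncomputable def P3distIn (n : ℕ) : Multiset ℝ :=
  letI := Classical.decEq ℂ
  (Multiset.map (Sym2.lift ⟨dist, fun a b => dist_comm a b⟩)
      (((P3 n).sym2.filter fun s => ¬ s.IsDiag).val)).filter
    fun x => 2 * Rpow n - 3 ≤ x ∧ x ≤ 2 * Rpow n


lemma abs_exp_sub_exp (a b : ℝ) :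
    ‖Complex.exp ((a:ℂ) * Complex.I) - Complex.exp ((b:ℂ) * Complex.I)‖
      = 2 * |Real.sin ((a - b) / 2)| := by
  have hre : (Complex.exp ((a:ℂ) * Complex.I) - Complex.exp ((b:ℂ) * Complex.I)).re
      = Real.cos a - Real.cos b := by
    simp [Complex.exp_ofReal_mul_I_re]
  have him : (Complex.exp ((a:ℂ) * Complex.I) - Complex.exp ((b:ℂ) * Complex.I)).im
      = Real.sin a - Real.sin b := by
    simp [Complex.exp_ofReal_mul_I_im]
  rw [Complex.norm_def, Complex.normSq_apply, hre, him]
  have h1 : Real.cos (a - b) = Real.cos a * Real.cos b + Real.sin a * Real.sin b :=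
    Real.cos_sub a b
  have h2 : Real.cos (2 * ((a-b)/2)) = 2 * Real.cos ((a-b)/2) ^ 2 - 1 :=
    Real.cos_two_mul _
  have h3 : Real.sin ((a-b)/2) ^ 2 + Real.cos ((a-b)/2) ^ 2 = 1 := Real.sin_sq_add_cos_sq _
  have h4 : Real.sin a ^ 2 + Real.cos a ^ 2 = 1 := Real.sin_sq_add_cos_sq _
  have h5 : Real.sin b ^ 2 + Real.cos b ^ 2 = 1 := Real.sin_sq_add_cos_sq _
  have key : (Real.cos a - Real.cos b) * (Real.cos a - Real.cos b)
      + (Real.sin a - Real.sin b) * (Real.sin a - Real.sin b)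
      = (2 * Real.sin ((a-b)/2)) ^ 2 := by
    have : Real.cos (2 * ((a-b)/2)) = Real.cos (a - b) := by ring_nf
    nlinarith [h1, h2, h3, h4, h5, this]
  rw [key, Real.sqrt_sq_eq_abs, abs_mul]
  norm_num

lemma chord (R a b : ℝ) (hR : 0 ≤ R) :
    dist ((R:ℂ) * Complex.exp ((a:ℂ) * Complex.I)) ((R:ℂ) * Complex.exp ((b:ℂ) * Complex.I))
      = 2 * R * |Real.sin ((a - b) / 2)| := by
  rw [Complex.dist_eq, ← mul_sub, norm_mul, Complex.norm_real, Real.norm_eq_abs, abs_of_nonneg hR,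
    abs_exp_sub_exp]
  ring


lemma dist_pq (n : ℕ) (hR : 0 < Rpow n) (s t : ℕ) :
    dist ((Rpow n : ℂ) * Complex.exp ((2 * (s : ℝ) * (Rpow n)⁻¹ : ℝ) * Complex.I))
      ((Rpow n : ℂ) * Complex.exp
        ((π + 2 * (t : ℝ) * ((Rpow n)⁻¹ + 4 * ((Rpow n ^ 2)⁻¹)) : ℝ) * Complex.I))
      = 2 * Rpow n * |Real.cos (((t:ℝ) - s) / Rpow n + 4 * t / (Rpow n)^2)| := by
  rw [chord _ _ _ hR.le]
  congr 1
  have he : (2 * (s : ℝ) * (Rpow n)⁻¹ - (π + 2 * (t : ℝ) * ((Rpow n)⁻¹ + 4 * ((Rpow n ^ 2)⁻¹)))) / 2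
      = -(π/2 + (((t:ℝ) - s) / Rpow n + 4 * t / (Rpow n)^2)) := by
    field_simp
    ring
  rw [he, Real.sin_neg, abs_neg, Real.sin_add, Real.sin_pi_div_two, Real.cos_pi_div_two]
  norm_num

lemma P3distIn_bounds {n : ℕ} {x : ℝ} (hx : x ∈ P3distIn n) :
    2 * Rpow n - 3 ≤ x ∧ x ≤ 2 * Rpow n := (Multiset.mem_filter.1 hx).2


lemma mem_P3distIn (n : ℕ) {s t : ℕ} (hs : s ≤ ⌊Rpow n / 2⌋₊) (ht : t ≤ ⌊Rpow n / 2⌋₊)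
    (hne : ((Rpow n : ℂ) * Complex.exp ((2 * (s : ℝ) * (Rpow n)⁻¹ : ℝ) * Complex.I)) ≠
      ((Rpow n : ℂ) * Complex.exp
        ((π + 2 * (t : ℝ) * ((Rpow n)⁻¹ + 4 * ((Rpow n ^ 2)⁻¹)) : ℝ) * Complex.I)))
    (h1 : 2 * Rpow n - 3 ≤ dist
        ((Rpow n : ℂ) * Complex.exp ((2 * (s : ℝ) * (Rpow n)⁻¹ : ℝ) * Complex.I))
        ((Rpow n : ℂ) * Complex.exp
          ((π + 2 * (t : ℝ) * ((Rpow n)⁻¹ + 4 * ((Rpow n ^ 2)⁻¹)) : ℝ) * Complex.I)))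
    (h2 : dist
        ((Rpow n : ℂ) * Complex.exp ((2 * (s : ℝ) * (Rpow n)⁻¹ : ℝ) * Complex.I))
        ((Rpow n : ℂ) * Complex.exp
          ((π + 2 * (t : ℝ) * ((Rpow n)⁻¹ + 4 * ((Rpow n ^ 2)⁻¹)) : ℝ) * Complex.I))
        ≤ 2 * Rpow n) :
    dist ((Rpow n : ℂ) * Complex.exp ((2 * (s : ℝ) * (Rpow n)⁻¹ : ℝ) * Complex.I))
        ((Rpow n : ℂ) * Complex.exp
          ((π + 2 * (t : ℝ) * ((Rpow n)⁻¹ + 4 * ((Rpow n ^ 2)⁻¹)) : ℝ) * Complex.I))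
      ∈ P3distIn n := by
  classical
  set P := (Rpow n : ℂ) * Complex.exp ((2 * (s : ℝ) * (Rpow n)⁻¹ : ℝ) * Complex.I) with hP
  set Q := (Rpow n : ℂ) * Complex.exp
      ((π + 2 * (t : ℝ) * ((Rpow n)⁻¹ + 4 * ((Rpow n ^ 2)⁻¹)) : ℝ) * Complex.I) with hQ
  rw [P3distIn, Multiset.mem_filter]
  refine ⟨?_, h1, h2⟩
  rw [Multiset.mem_map]
  refine ⟨s(P, Q), ?_, Sym2.lift_mk _ _ _⟩
  rw [Finset.mem_val, Finset.mem_filter]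
  constructor
  · rw [Finset.mk_mem_sym2_iff]
    constructor
    · exact Finset.mem_union_left _ (Finset.mem_image.2
        ⟨s, Finset.mem_range.2 (Nat.lt_succ_of_le hs), rfl⟩)
    · exact Finset.mem_union_right _ (Finset.mem_image.2
        ⟨t, Finset.mem_range.2 (Nat.lt_succ_of_le ht), rfl⟩)
  · simpa [Sym2.mk_isDiag_iff] using hne

set_option maxHeartbeats 1600000 in
lemma density_step (n : ℕ) (hR : (10:ℝ)^4 ≤ Rpow n) {d x : ℝ}
    (hd1 : 2 * Rpow n - 3 ≤ d)
    (hx0 : 0 < x) (hx' : x * Real.sqrt (Rpow n) ≤ 1.75)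
    (hcos : d = 2 * Rpow n * Real.cos x)
    {s t : ℕ} (hst : s ≤ t) (ht : (t:ℝ) ≤ Rpow n / 2)
    (hv1 : Rpow n * x - 4 / Rpow n ≤ ((t:ℝ) - s) + 4 * t / Rpow n)
    (hv2 : ((t:ℝ) - s) + 4 * t / Rpow n < Rpow n * x) :
    ∃ d' ∈ P3distIn n, d < d' ∧ d' ≤ d + 15 / (Rpow n * Real.sqrt (Rpow n)) := by
  have hR0' : 0 < Rpow n := lt_of_lt_of_le (by norm_num) hR
  have hd' := dist_pq n hR0' s t
  obtain ⟨R, hRdef⟩ : ∃ R', R' = Rpow n := ⟨_, rfl⟩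
  rw [← hRdef] at hR hd1 hx' hcos ht hv1 hv2 ⊢
  conv at hd' => rhs; rw [← hRdef]
  have hR0 : (0:ℝ) < R := lt_of_lt_of_le (by norm_num) hR
  have hsR : (100:ℝ) ≤ Real.sqrt R := by
    have h4 : ((10:ℝ)^4) = 100^2 := by norm_num
    have := Real.sqrt_le_sqrt hR
    rwa [h4, Real.sqrt_sq (by norm_num : (0:ℝ) ≤ 100)] at this
  have hsR0 : (0:ℝ) < Real.sqrt R := by linarith
  have hsq : Real.sqrt R * Real.sqrt R = R := Real.mul_self_sqrt hR0.le
  have hxsmall : x ≤ 1.75 / 100 := by nlinarith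
  obtain ⟨θ, hθdef⟩ : ∃ θ', θ' = ((t:ℝ) - s) / R + 4 * t / R^2 := ⟨_, rfl⟩
  rw [← hθdef] at hd'
  have hts : (0:ℝ) ≤ (t:ℝ) - s := by
    have : (s:ℝ) ≤ (t:ℝ) := Nat.cast_le.2 hst
    linarith
  have ht0 : (0:ℝ) ≤ (t:ℝ) := Nat.cast_nonneg t
  have hθ0 : 0 ≤ θ := by rw [hθdef]; positivity
  have hθv : θ = (((t:ℝ) - s) + 4 * t / R) / R := by
    rw [hθdef]; field_simp
  have hθx : θ < x := by
    rw [hθv, div_lt_iff₀ hR0]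
    calc ((t:ℝ) - s) + 4 * t / R < R * x := hv2
    _ = x * R := by ring
  have hθx2 : x - θ ≤ 4 / R^2 := by
    have h1 : R * x - (((t:ℝ) - s) + 4 * t / R) ≤ 4 / R := by linarith
    calc x - θ = (R * x - (((t:ℝ) - s) + 4 * t / R)) / R := by
          rw [hθv]; field_simp
      _ ≤ (4 / R) / R := by gcongr
      _ = 4 / R^2 := by rw [div_div, ← pow_two]
  have hpi : (3:ℝ) < π := Real.pi_gt_three
  have hxpi : x ≤ π / 2 := by linarith
  have hcosθx : Real.cos x < Real.cos θ :=
    Real.cos_lt_cos_of_nonneg_of_le_pi hθ0 (by linarith) hθx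
  have hcosθpos : 0 < Real.cos θ := by
    apply Real.cos_pos_of_mem_Ioo
    constructor
    · linarith
    · linarith
  obtain ⟨D, hDdef⟩ : ∃ D', D' = 2 * R * Real.cos θ := ⟨_, rfl⟩
  rw [abs_of_pos hcosθpos, ← hDdef] at hd'
  -- basic facts about D
  have hDlt : d < D := by
    rw [hDdef, hcos]
    have := hcosθx
    nlinarith
  have hDle : D ≤ 2 * R := by
    rw [hDdef]
    nlinarith [Real.cos_le_one θ]
  have hD1 : 2 * R - 3 ≤ D := by linarith
  have h1e4 : (10:ℝ)^4 = 10000 := by norm_num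
  have hDpos : 0 < D := by linarith
  -- gap bound
  have hcc : Real.cos θ - Real.cos x =
      2 * Real.sin ((θ + x)/2) * Real.sin ((x - θ)/2) := by
    rw [Real.cos_sub_cos]
    have h1 : (θ - x)/2 = -((x - θ)/2) := by ring
    rw [h1, Real.sin_neg]
    ring
  have hs1a : 0 ≤ Real.sin ((θ + x)/2) :=
    Real.sin_nonneg_of_nonneg_of_le_pi (by linarith) (by linarith)
  have hs1b : Real.sin ((θ + x)/2) ≤ x := by
    calc Real.sin ((θ + x)/2) ≤ (θ + x)/2 := Real.sin_le (by linarith)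
      _ ≤ x := by linarith
  have hs2a : 0 ≤ Real.sin ((x - θ)/2) :=
    Real.sin_nonneg_of_nonneg_of_le_pi (by linarith) (by linarith)
  have hs2b : Real.sin ((x - θ)/2) ≤ 2 / R^2 := by
    have h24 : (4:ℝ)/R^2 = 2*(2/R^2) := by ring
    calc Real.sin ((x - θ)/2) ≤ (x - θ)/2 := Real.sin_le (by linarith)
      _ ≤ 2 / R^2 := by linarith
  have hgap : D ≤ d + 15 / (R * Real.sqrt R) := by
    have h1 : D - d = 4 * R * (Real.sin ((θ + x)/2) * Real.sin ((x - θ)/2)) := by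
      rw [hDdef, hcos]
      nlinarith [hcc]
    have h2 : 4 * R * (Real.sin ((θ + x)/2) * Real.sin ((x - θ)/2))
        ≤ 4 * R * (x * (2 / R^2)) := by
      gcongr
    have h3 : 4 * R * (x * (2 / R^2)) = 8 * x / R := by
      field_simp; ring
    have h4 : 8 * x / R ≤ 15 / (R * Real.sqrt R) := by
      rw [div_le_div_iff₀ hR0 (by positivity)]
      have h5 : 8 * (x * Real.sqrt R) ≤ 14 := by linarith
      nlinarith
    linarith
  -- membership
  have hne : ((Rpow n : ℂ) * Complex.exp ((2 * (s : ℝ) * (Rpow n)⁻¹ : ℝ) * Complex.I)) ≠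
      ((Rpow n : ℂ) * Complex.exp
        ((π + 2 * (t : ℝ) * ((Rpow n)⁻¹ + 4 * ((Rpow n ^ 2)⁻¹)) : ℝ) * Complex.I)) := by
    apply dist_pos.1
    rw [hd']
    exact hDpos
  have hs' : s ≤ ⌊Rpow n / 2⌋₊ := by
    apply Nat.le_floor
    rw [← hRdef]
    linarith
  have ht' : t ≤ ⌊Rpow n / 2⌋₊ := by
    apply Nat.le_floor
    rw [← hRdef]
    exact ht
  refine ⟨D, ?_, hDlt, hgap⟩
  rw [← hd']
  apply mem_P3distIn n hs' ht' hne
  · rw [hd', ← hRdef]; exact hD1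
  · rw [hd', ← hRdef]; exact hDle

set_option maxHeartbeats 1600000 in
lemma density (n : ℕ) (hR : (10:ℝ)^4 ≤ Rpow n) {d : ℝ}
    (hd1 : 2 * Rpow n - 3 ≤ d) (hd2 : d < 2 * Rpow n) :
    ∃ d' ∈ P3distIn n, d < d' ∧ d' ≤ d + 15 / (Rpow n * Real.sqrt (Rpow n)) := by
  have h1e4 : (10:ℝ)^4 = 10000 := by norm_num
  have hR0 : (0:ℝ) < Rpow n := by linarith
  have hsR : (100:ℝ) ≤ Real.sqrt (Rpow n) := by
    have h4 : ((10:ℝ)^4) = 100^2 := by norm_num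
    have := Real.sqrt_le_sqrt hR
    rwa [h4, Real.sqrt_sq (by norm_num : (0:ℝ) ≤ 100)] at this
  have hsR0 : (0:ℝ) < Real.sqrt (Rpow n) := by linarith
  have hsq : Real.sqrt (Rpow n) * Real.sqrt (Rpow n) = Rpow n :=
    Real.mul_self_sqrt hR0.le
  have hd0 : 0 < d := by linarith
  -- the angle x with d = 2R cos x
  obtain ⟨x, hx⟩ : ∃ x, x = Real.arccos (d / (2 * Rpow n)) := ⟨_, rfl⟩
  have hq1 : d / (2 * Rpow n) < 1 := by
    rw [div_lt_one (by positivity)]; linarith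
  have hq0 : 0 ≤ d / (2 * Rpow n) := by positivity
  have hx0 : 0 < x := hx ▸ Real.arccos_pos.2 hq1
  have hxpi2 : x ≤ π / 2 := hx ▸ Real.arccos_le_pi_div_two.2 hq0
  have hcosx : Real.cos x = d / (2 * Rpow n) :=
    hx ▸ Real.cos_arccos (by linarith) hq1.le
  have hcos : d = 2 * Rpow n * Real.cos x := by
    rw [hcosx]; field_simp
  have hcosge : 1 - 3 / (2 * Rpow n) ≤ Real.cos x := by
    rw [hcosx, le_div_iff₀ (by positivity)]
    have : (1 - 3 / (2 * Rpow n)) * (2 * Rpow n) = 2 * Rpow n - 3 := by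
      field_simp
    linarith
  -- bound x * sqrt R ≤ 1.75
  have hpi : (3:ℝ) < π := Real.pi_gt_three
  have hpi' : π < 3.2 := by
    have := Real.pi_lt_d2
    linarith
  have hx16 : x ≤ 1.6 := by linarith
  have hcos2 : Real.cos x = 1 - 2 * Real.sin (x/2)^2 := by
    have h2 := Real.cos_two_mul (x/2)
    have h3 := Real.sin_sq_add_cos_sq (x/2)
    have h4 : (2:ℝ) * (x/2) = x := by ring
    rw [h4] at h2
    linarith
  have h5 : 2 * Real.sin (x/2)^2 ≤ 3 / (2 * Rpow n) := by linarith
  have hsinpos : 0 ≤ Real.sin (x/2) :=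
    Real.sin_nonneg_of_nonneg_of_le_pi (by linarith) (by linarith)
  have hsl : x/2 * (1 - x^2/16) ≤ Real.sin (x/2) := by
    have := Real.sin_gt_sub_cube (by linarith : 0 < x/2)
    have hcube : 0 ≤ (x/2)^3 := by positivity
    have heq : x/2 - (x/2)^3/4 = x/2 * (1 - x^2/16) := by ring
    linarith
  have hA84 : (0.84:ℝ) ≤ 1 - x^2/16 := by nlinarith
  have hslpos : 0 ≤ x/2 * (1 - x^2/16) := by nlinarith
  have hsq1 : (x/2 * (1 - x^2/16))^2 ≤ Real.sin (x/2)^2 := by nlinarith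
  have key : (Rpow n * x^2) * (1 - x^2/16)^2 ≤ 3 := by
    have k1 : x^2/2 * (1 - x^2/16)^2 ≤ 3 / (2 * Rpow n) := by nlinarith
    have h := mul_le_mul_of_nonneg_right k1 (by positivity : (0:ℝ) ≤ 2 * Rpow n)
    rw [div_mul_cancel₀ _ (by positivity : (2 * Rpow n) ≠ 0)] at h
    nlinarith
  have hu1 : Rpow n * x^2 ≤ 4.26 := by
    have hh : (0.7056:ℝ) ≤ (1 - x^2/16)^2 := by nlinarith
    have := mul_le_mul_of_nonneg_left hh
      (by positivity : (0:ℝ) ≤ Rpow n * x^2)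
    nlinarith
  have hu : x * Real.sqrt (Rpow n) ≤ 2.07 := by
    nlinarith [sq_nonneg (x * Real.sqrt (Rpow n) - 2.07), mul_pos hx0 hsR0]
  have hxsmall : x ≤ 0.0207 := by nlinarith
  have hA99 : (0.9999:ℝ) ≤ (1 - x^2/16)^2 := by nlinarith
  have hu2 : Rpow n * x^2 ≤ 3.001 := by
    have := mul_le_mul_of_nonneg_left hA99
      (by positivity : (0:ℝ) ≤ Rpow n * x^2)
    nlinarith
  have hu3 : x * Real.sqrt (Rpow n) ≤ 1.75 := by
    nlinarith [sq_nonneg (x * Real.sqrt (Rpow n) - 1.7325), mul_pos hx0 hsR0]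
  -- now construct the pair (s, t)
  have hwpos : 0 < Rpow n * x := by positivity
  have hw175 : Rpow n * x ≤ 1.75 * Real.sqrt (Rpow n) := by
    have hxR : Rpow n * x = (x * Real.sqrt (Rpow n)) * Real.sqrt (Rpow n) := by
      rw [mul_assoc, hsq]; ring
    nlinarith [mul_le_mul_of_nonneg_right hu3 hsR0.le]
  clear hx hq0 hq1 hxpi2 hcosx hcosge hpi hpi' hx16 hcos2 h5 hsinpos hsl hA84
  clear hslpos hsq1 key hu1 hu hxsmall hA99 hu2 hd2 hd0
  by_cases hcA : Rpow n * x ≤ 4 / Rpow n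
  · -- case A : s = t = 0
    refine density_step n hR hd1 hx0 hu3 hcos (le_refl 0) ?_ ?_ ?_
    · simp only [Nat.cast_zero]; positivity
    · simp only [Nat.cast_zero]; norm_num; linarith
    · simp only [Nat.cast_zero]; norm_num; linarith
  · push_neg at hcA
    set M := ⌊Rpow n / 4⌋₊ with hMdef
    have hM1 : (M:ℝ) ≤ Rpow n / 4 := Nat.floor_le (by positivity)
    have hM2 : Rpow n / 4 < (M:ℝ) + 1 := Nat.lt_floor_add_one _
    have hc1 : 4 * (M:ℝ) / Rpow n ≤ 1 := by
      rw [div_le_one hR0]; linarith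
    have hc2 : 1 - 4 / Rpow n < 4 * (M:ℝ) / Rpow n := by
      rw [lt_div_iff₀ hR0]
      have he : (1 - 4/Rpow n) * Rpow n = Rpow n - 4 := by field_simp
      rw [he]; linarith
    by_cases hcB : Rpow n * x ≤ 4 * (M:ℝ) / Rpow n
    · -- case B : s = t = ⌈R·(R·x)/4⌉ - 1
      set T := ⌈Rpow n * (Rpow n * x) / 4⌉₊ with hT
      have hTpos : 1 ≤ T := Nat.one_le_iff_ne_zero.2 (by
        simp only [hT, ne_eq, Nat.ceil_eq_zero, not_le]
        positivity)
      have hTle : Rpow n * (Rpow n * x) / 4 ≤ (T:ℝ) := Nat.le_ceil _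
      have hTlt : (T:ℝ) < Rpow n * (Rpow n * x) / 4 + 1 :=
        Nat.ceil_lt_add_one (by positivity)
      have htcast : ((T - 1 : ℕ):ℝ) = (T:ℝ) - 1 := by
        push_cast [hTpos]; ring
      have e1 : 4*(Rpow n*(Rpow n*x)/4 - 1)/Rpow n = Rpow n * x - 4/Rpow n := by
        field_simp
      have e2 : 4*(Rpow n*(Rpow n*x)/4)/Rpow n = Rpow n * x := by
        field_simp
      clear_value T
      have hb1 : 4*((Rpow n*(Rpow n*x)/4 - 1))/Rpow n ≤ 4*((T - 1 : ℕ):ℝ)/Rpow n := by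
        gcongr
        linarith
      have hb2 : 4*((T - 1 : ℕ):ℝ)/Rpow n < 4*(Rpow n*(Rpow n*x)/4)/Rpow n := by
        gcongr
        linarith
      refine density_step n hR hd1 hx0 hu3 hcos (le_refl (T - 1)) ?_ ?_ ?_
      · -- (t:ℝ) ≤ R/2
        have hRM : Rpow n * (Rpow n * x) / 4 ≤ (M:ℝ) := by
          have h2 : Rpow n * (Rpow n * x) ≤ Rpow n * (4*(M:ℝ)/Rpow n) := by gcongr
          have h3 : Rpow n * (4*(M:ℝ)/Rpow n) = 4 * (M:ℝ) := by field_simp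
          linarith
        rw [htcast]
        linarith
      · linarith [hb1, e1]
      · linarith [hb2, e2]
    · -- case C
      push_neg at hcB
      set c := 4 * (M:ℝ) / Rpow n with hcdef
      set w := Rpow n * x with hwdef
      set Kc := ⌈w - c⌉₊ with hKc
      have hKpos : 1 ≤ Kc := Nat.one_le_iff_ne_zero.2 (by
        simp only [hKc, ne_eq, Nat.ceil_eq_zero, not_le]
        linarith)
      have hKle : w - c ≤ (Kc:ℝ) := Nat.le_ceil _
      have hKlt : (Kc:ℝ) < (w - c) + 1 := Nat.ceil_lt_add_one (by linarith)
      set k := Kc - 1 with hkdef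
      have hkcast : (k:ℝ) = (Kc:ℝ) - 1 := by
        rw [hkdef, Nat.cast_sub hKpos, Nat.cast_one]
      have hk1 : (k:ℝ) < w - c := by rw [hkcast]; linarith
      have hk2 : w - c ≤ (k:ℝ) + 1 := by rw [hkcast]; linarith
      set y := w - c - (k:ℝ) with hydef
      have hy0 : 0 < y := by rw [hydef]; linarith
      have hy1 : y ≤ 1 := by rw [hydef]; linarith
      set T := ⌈Rpow n * y / 4⌉₊ with hT
      have hTpos : 1 ≤ T := Nat.one_le_iff_ne_zero.2 (by
        simp only [hT, ne_eq, Nat.ceil_eq_zero, not_le]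
        positivity)
      have hTle : Rpow n * y / 4 ≤ (T:ℝ) := Nat.le_ceil _
      have hTlt : (T:ℝ) < Rpow n * y / 4 + 1 := Nat.ceil_lt_add_one (by positivity)
      set t1 := T - 1 with ht1def
      have ht1cast : (t1:ℝ) = (T:ℝ) - 1 := by
        rw [ht1def, Nat.cast_sub hTpos, Nat.cast_one]
      have ht1a : Rpow n * y / 4 - 1 ≤ (t1:ℝ) := by rw [ht1cast]; linarith
      have ht1b : (t1:ℝ) < Rpow n * y / 4 := by rw [ht1cast]; linarith
      -- k ≤ M
      have hwsR : w ≤ 1.75 * Real.sqrt (Rpow n) := hw175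
      have hkM : k ≤ M := by
        have h1 : (k:ℝ) < (M:ℝ) := by
          have hM3 : 25 * Real.sqrt (Rpow n) ≤ Rpow n / 4 := by nlinarith
          nlinarith
        exact Nat.le_of_lt_succ (Nat.lt_succ_of_lt (Nat.cast_lt.1 h1))
      set t := t1 + M with htdef
      have hkt : k ≤ t := le_trans hkM (Nat.le_add_left M t1)
      set s' := t - k with hsdef
      have hscast : (s':ℝ) = (t:ℝ) - (k:ℝ) := by
        rw [hsdef, Nat.cast_sub hkt]
      have hts : (t:ℝ) - (s':ℝ) = (k:ℝ) := by rw [hscast]; ring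
      have htcast : (t:ℝ) = (t1:ℝ) + (M:ℝ) := by rw [htdef]; push_cast; ring
      clear_value M w c Kc k y T t1 t s'
      refine density_step n hR hd1 hx0 hu3 hcos (Nat.sub_le t k) ?_ ?_ ?_
      · -- (t:ℝ) ≤ R/2
        rw [htcast]
        have h8 : Rpow n * y / 4 ≤ Rpow n / 4 := by
          have h9 := mul_le_mul_of_nonneg_left hy1 hR0.le
          linarith
        linarith [ht1b, hM1]
      · -- hv1
        rw [← hsdef, hts, htcast]
        have e3 : (k:ℝ) + 4 * ((t1:ℝ) + (M:ℝ)) / Rpow n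
            = (k:ℝ) + 4*(t1:ℝ)/Rpow n + c := by
          rw [hcdef]; field_simp; try ring
        have e4 : Rpow n * x - 4/Rpow n = (k:ℝ) + c + y - 4/Rpow n := by
          rw [hydef, hwdef]; ring
        have hb3 : y - 4/Rpow n ≤ 4*(t1:ℝ)/Rpow n := by
          have h6 : 4*(Rpow n * y/4 - 1)/Rpow n ≤ 4*(t1:ℝ)/Rpow n := by gcongr
          have h7 : 4*(Rpow n * y/4 - 1)/Rpow n = y - 4/Rpow n := by field_simp; try ring
          linarith
        linarith [e3, e4, hb3]
      · -- hv2
        rw [← hsdef, hts, htcast]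
        have e3 : (k:ℝ) + 4 * ((t1:ℝ) + (M:ℝ)) / Rpow n
            = (k:ℝ) + 4*(t1:ℝ)/Rpow n + c := by
          rw [hcdef]; field_simp; try ring
        have hb4 : 4*(t1:ℝ)/Rpow n < y := by
          have h6 : 4*(t1:ℝ)/Rpow n < 4*(Rpow n * y/4)/Rpow n := by gcongr
          have h7 : 4*(Rpow n * y/4)/Rpow n = y := by field_simp; try ring
          linarith
        have : w = (k:ℝ) + c + y := by rw [hydef]; ring
        linarith [e3, hb4]

/-- For all sufficiently large `n`: if `e 0 ≤ e 1 ≤ … ≤ e (K-1)` is the nondecreasing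
enumeration of the pairwise distances of `P₃` lying in `[2R - 3, 2R]` (with
`R = n^{4/7}`), then `∑ (e_{i+1} - e_i)² ≤ 45·n^{-6/7}`. -/
theorem P3_sum_sq_gaps :
    ∃ n₀ : ℕ, ∀ n : ℕ, n₀ ≤ n →
      ∀ K : ℕ, ∀ e : ℕ → ℝ,
        K = (P3distIn n).card →
        (∀ i, i + 1 < K → e i ≤ e (i + 1)) →
        (Finset.range K).val.map e = P3distIn n →
        ∑ i ∈ Finset.range (K - 1), (e (i + 1) - e i) ^ 2
          ≤ 45 * (n : ℝ) ^ ((-6 : ℝ) / 7) := by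
  refine ⟨10^7, fun n hn K e hK hmono hmap => ?_⟩
  have hn0 : (0:ℝ) < (n:ℝ) := by
    have : 0 < n := lt_of_lt_of_le (by norm_num) hn
    exact_mod_cast this
  have hR : (10:ℝ)^4 ≤ Rpow n := by
    have h2 : Rpow (10^7) ≤ Rpow n := by
      unfold Rpow
      apply Real.rpow_le_rpow (by positivity) _ (by norm_num)
      exact_mod_cast hn
    have h3 : Rpow (10^7) = (10:ℝ)^4 := by
      unfold Rpow
      rw [show (((10:ℕ)^7 : ℕ):ℝ) = (10:ℝ)^(7:ℕ) by push_cast; ring]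
      rw [← Real.rpow_natCast (10:ℝ) 7, ← Real.rpow_mul (by norm_num : (0:ℝ) ≤ 10)]
      rw [show ((7:ℕ):ℝ) * ((4:ℝ)/7) = ((4:ℕ):ℝ) by push_cast; norm_num,
        Real.rpow_natCast]
    linarith
  have hR0 : 0 < Rpow n := lt_of_lt_of_le (by norm_num) hR
  have hsR0 : 0 < Real.sqrt (Rpow n) := Real.sqrt_pos.2 hR0
  have hRHS : (n:ℝ) ^ ((-6:ℝ)/7) = 1 / (Rpow n * Real.sqrt (Rpow n)) := by
    unfold Rpow
    rw [Real.sqrt_eq_rpow, ← Real.rpow_mul hn0.le, ← Real.rpow_add hn0]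
    rw [show (4:ℝ)/7 + 4/7 * (1/2) = 6/7 by norm_num]
    rw [show ((-6:ℝ)/7) = -(6/7) by norm_num]
    rw [Real.rpow_neg hn0.le]
    rw [one_div]
  have hmem : ∀ i, i < K → e i ∈ P3distIn n := by
    intro i hi
    rw [← hmap]
    exact Multiset.mem_map.2 ⟨i, (Finset.mem_range.2 hi), rfl⟩
  have hmono' : ∀ i j, i ≤ j → j < K → e i ≤ e j := by
    intro i j hij hj
    induction j with
    | zero =>
      have : i = 0 := Nat.le_zero.1 hij
      rw [this]
    | succ m ih =>
      rcases Nat.lt_or_ge i (m+1) with h | h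
      · exact le_trans (ih (Nat.lt_succ_iff.1 h) (lt_trans (Nat.lt_succ_self m) hj))
          (hmono m hj)
      · have : i = m + 1 := le_antisymm hij h
        rw [this]
  set G := 15 / (Rpow n * Real.sqrt (Rpow n)) with hGdef
  have hG0 : 0 ≤ G := by positivity
  have hgap : ∀ i, i + 1 < K → e (i+1) - e i ≤ G := by
    intro i hi
    rcases le_or_gt (e (i+1)) (e i) with h | h
    · linarith
    · have hei := hmem i (by omega)
      have hei1 := hmem (i+1) hi
      obtain ⟨h1, h2⟩ := P3distIn_bounds hei
      obtain ⟨h3, h4⟩ := P3distIn_bounds hei1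
      have hlt2R : e i < 2 * Rpow n := lt_of_lt_of_le h h4
      obtain ⟨d', hd'mem, hd'1, hd'2⟩ := density n hR h1 hlt2R
      rw [← hmap] at hd'mem
      obtain ⟨j, hjmem, hje⟩ := Multiset.mem_map.1 hd'mem
      have hjK : j < K := Finset.mem_range.1 hjmem
      have hij : i + 1 ≤ j := by
        by_contra hc
        push_neg at hc
        have hji := hmono' j i (by omega) (by omega)
        rw [hje] at hji
        linarith
      have hj2 := hmono' (i+1) j hij hjK
      rw [hje] at hj2
      linarith
  rcases Nat.eq_zero_or_pos K with hK0 | hKpos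
  · rw [hK0]
    norm_num
    positivity
  · have hsum1 : ∑ i ∈ Finset.range (K-1), (e (i+1) - e i)^2
        ≤ ∑ i ∈ Finset.range (K-1), G * (e (i+1) - e i) := by
      apply Finset.sum_le_sum
      intro i hi
      have hiK : i + 1 < K := by
        have := Finset.mem_range.1 hi
        omega
      have hg0 : 0 ≤ e (i+1) - e i := sub_nonneg.2 (hmono i hiK)
      have hgG := hgap i hiK
      nlinarith
    have hsum2 : ∑ i ∈ Finset.range (K-1), G * (e (i+1) - e i)
        = G * (e (K-1) - e 0) := by
      rw [← Finset.mul_sum, Finset.sum_range_sub (f := e)]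
    have h03 : e (K-1) - e 0 ≤ 3 := by
      obtain ⟨ha, hb⟩ := P3distIn_bounds (hmem (K-1) (by omega))
      obtain ⟨hc, hd⟩ := P3distIn_bounds (hmem 0 hKpos)
      linarith
    calc ∑ i ∈ Finset.range (K-1), (e (i+1) - e i)^2
        ≤ G * (e (K-1) - e 0) := by rw [← hsum2]; exact hsum1
      _ ≤ G * 3 := mul_le_mul_of_nonneg_left h03 hG0
      _ = 45 * (n:ℝ)^((-6:ℝ)/7) := by rw [hRHS, hGdef]; ring
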